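/- arXiv:2302.12021 — 3 statements merged into one kernel-verified Lean document; each statement's English description precedes it below -/
import Mathlib

section
/- Let V be the vector space of real polynomials in n variables of degree at most 2, let X = {x₁, …, x_m} ⊂ ℝⁿ be a finite set, and let Q_α ∈ V. Suppose that for every h : ℝⁿ → ℝ for which the interpolation constraints Q(x_i) = h(x_i), i = 1,…,m are feasible in V, the problem min_{Q ∈ V} ‖∇²Q − ∇²Q_α‖_F² subject to Q(x_i) = h(x_i) for all i has a unique solution, denoted M(h). Then for any f : ℝⁿ → ℝ for which the constraints are feasible and any C₁, C₂ ∈ ℝ, M(C₁f + C₂) = C₁·M(f) + C₂ + (C₁ − 1)·(M₀(Q_α) − Q_α), where M₀(Q_α) denotes the unique minimizer of ‖∇²Q‖_F² subject to Q(x_i) = Q_α(x_i) for all i. -/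
structure Quad (n : ℕ) where
  c : ℝ
  g : Fin n → ℝ
  A : Matrix (Fin n) (Fin n) ℝ
  symm : A.IsSymm

namespace Quad
variable {n : ℕ}

noncomputable def eval (Q : Quad n) (x : Fin n → ℝ) : ℝ :=
  Q.c + (∑ i, Q.g i * x i) + (1 / 2) * ∑ i, ∑ j, x i * Q.A i j * x j

def add (P Q : Quad n) : Quad n :=
  ⟨P.c + Q.c, P.g + Q.g, P.A + Q.A, P.symm.add Q.symm⟩

def sub (P Q : Quad n) : Quad n :=
  ⟨P.c - Q.c, P.g - Q.g, P.A - Q.A, P.symm.sub Q.symm⟩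

def smul (r : ℝ) (Q : Quad n) : Quad n :=
  ⟨r * Q.c, r • Q.g, r • Q.A, by
    simp only [Matrix.IsSymm, Matrix.transpose_smul, Q.symm.eq]⟩

def addConst (Q : Quad n) (r : ℝ) : Quad n := ⟨Q.c + r, Q.g, Q.A, Q.symm⟩

protected def zero : Quad n := ⟨0, 0, 0, by simp [Matrix.IsSymm]⟩

end Quad

noncomputable def frobSq {n : ℕ} (M : Matrix (Fin n) (Fin n) ℝ) : ℝ := ∑ i, ∑ j, (M i j) ^ 2

def Interpolates {n m : ℕ} (Q : Quad n) (h : (Fin n → ℝ) → ℝ)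
    (x : Fin m → (Fin n → ℝ)) : Prop :=
  ∀ i, Q.eval (x i) = h (x i)

def IsLFNModel {n m : ℕ} (B : Quad n) (h : (Fin n → ℝ) → ℝ)
    (x : Fin m → (Fin n → ℝ)) (Q : Quad n) : Prop :=
  Interpolates Q h x ∧
    ∀ Q' : Quad n, Interpolates Q' h x → frobSq (Q.A - B.A) ≤ frobSq (Q'.A - B.A)

noncomputable def frobInner {n : ℕ} (M N : Matrix (Fin n) (Fin n) ℝ) : ℝ :=
  ∑ i, ∑ j, M i j * N i j

lemma frobSq_expand {n : ℕ} (M N : Matrix (Fin n) (Fin n) ℝ) :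
    frobSq (M + N) = frobSq M + 2 * frobInner M N + frobSq N := by
  have h : ∀ i j : Fin n, ((M + N) i j) ^ 2
      = M i j ^ 2 + 2 * (M i j * N i j) + N i j ^ 2 := by
    intro i j; simp [Matrix.add_apply]; ring
  simp only [frobSq, frobInner, h, Finset.sum_add_distrib, Finset.mul_sum]

lemma frobSq_nonneg {n : ℕ} (M : Matrix (Fin n) (Fin n) ℝ) : 0 ≤ frobSq M :=
  Finset.sum_nonneg fun _ _ => Finset.sum_nonneg fun _ _ => sq_nonneg _

lemma frobInner_smul_add {n : ℕ} (a b : ℝ) (M N P : Matrix (Fin n) (Fin n) ℝ) :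
    frobInner (a • M + b • N) P = a * frobInner M P + b * frobInner N P := by
  simp only [frobInner, Finset.mul_sum]
  rw [← Finset.sum_add_distrib]
  refine Finset.sum_congr rfl fun i _ => ?_
  rw [← Finset.sum_add_distrib]
  refine Finset.sum_congr rfl fun j _ => ?_
  simp [Matrix.add_apply, Matrix.smul_apply, smul_eq_mul]; ring

namespace Quad
variable {n : ℕ}

lemma eval_add (P Q : Quad n) (y : Fin n → ℝ) :
    (P.add Q).eval y = P.eval y + Q.eval y := by
  simp only [eval, add, Matrix.add_apply, Pi.add_apply, add_mul, mul_add,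
    Finset.sum_add_distrib]
  ring

lemma eval_sub (P Q : Quad n) (y : Fin n → ℝ) :
    (P.sub Q).eval y = P.eval y - Q.eval y := by
  simp only [eval, sub, Matrix.sub_apply, Pi.sub_apply, sub_mul, mul_sub,
    Finset.sum_sub_distrib]
  ring

lemma eval_smul (r : ℝ) (Q : Quad n) (y : Fin n → ℝ) :
    (Q.smul r).eval y = r * Q.eval y := by
  have h1 : ∑ i, (r • Q.g) i * y i = r * ∑ i, Q.g i * y i := by
    rw [Finset.mul_sum]
    exact Finset.sum_congr rfl fun i _ => by simp [mul_assoc]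
  have h2 : ∑ i, ∑ j, y i * (r • Q.A) i j * y j
      = r * ∑ i, ∑ j, y i * Q.A i j * y j := by
    rw [Finset.mul_sum]
    refine Finset.sum_congr rfl fun i _ => ?_
    rw [Finset.mul_sum]
    refine Finset.sum_congr rfl fun j _ => ?_
    simp only [Matrix.smul_apply, smul_eq_mul]; ring
  simp only [eval, smul]
  rw [h1, h2]; ring

lemma eval_addConst (Q : Quad n) (r : ℝ) (y : Fin n → ℝ) :
    (Q.addConst r).eval y = Q.eval y + r := by
  simp only [eval, addConst]; ring

end Quad

/-- First-order optimality: the Hessian residual of an LFN model is orthogonal to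
Hessians of quadratics vanishing on the interpolation set. -/
lemma lfn_orth {n m : ℕ} {B : Quad n} {h : (Fin n → ℝ) → ℝ}
    {x : Fin m → (Fin n → ℝ)} {Q : Quad n} (hQ : IsLFNModel B h x Q)
    (D : Quad n) (hD : Interpolates D (fun _ => 0) x) :
    frobInner (Q.A - B.A) D.A = 0 := by
  set a := frobInner (Q.A - B.A) D.A with ha
  set b := frobSq D.A with hb
  have hb0 : 0 ≤ b := frobSq_nonneg _
  have key : ∀ t : ℝ, 0 ≤ 2 * t * a + t ^ 2 * b := by
    intro t
    have hint : Interpolates (Q.add (D.smul t)) h x := by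
      intro i
      rw [Quad.eval_add, Quad.eval_smul, hQ.1 i, hD i]
      simp
    have := hQ.2 _ hint
    have hrw : (Q.add (D.smul t)).A - B.A = (Q.A - B.A) + t • D.A := by
      simp [Quad.add, Quad.smul]; abel
    rw [hrw, frobSq_expand] at this
    have h1 : frobInner (Q.A - B.A) (t • D.A) = t * a := by
      simp only [ha, frobInner, Matrix.smul_apply, smul_eq_mul, Finset.mul_sum]
      refine Finset.sum_congr rfl fun i _ => ?_
      refine Finset.sum_congr rfl fun j _ => ?_; ring
    have h2 : frobSq (t • D.A) = t ^ 2 * b := by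
      simp only [hb, frobSq, Matrix.smul_apply, smul_eq_mul, Finset.mul_sum]
      refine Finset.sum_congr rfl fun i _ => ?_
      refine Finset.sum_congr rfl fun j _ => ?_; ring
    rw [h1, h2] at this
    linarith
  have hk := key (-a / (b + 1))
  have hbp : (0:ℝ) < b + 1 := by linarith
  have h3 : 0 ≤ (2 * (-a / (b + 1)) * a + (-a / (b + 1)) ^ 2 * b) * (b + 1) ^ 2 :=
    mul_nonneg hk (sq_nonneg _)
  have e : (2 * (-a / (b + 1)) * a + (-a / (b + 1)) ^ 2 * b) * (b + 1) ^ 2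
      = -(a ^ 2 * (b + 2)) := by
    field_simp; ring
  rw [e] at h3
  have ha2 : a ^ 2 = 0 := by nlinarith [sq_nonneg a]
  exact pow_eq_zero_iff (by norm_num) |>.mp ha2

/-- Sufficiency of the orthogonality condition. -/
lemma lfn_of_orth {n m : ℕ} {B : Quad n} {h : (Fin n → ℝ) → ℝ}
    {x : Fin m → (Fin n → ℝ)} {Q : Quad n} (hint : Interpolates Q h x)
    (horth : ∀ D : Quad n, Interpolates D (fun _ => 0) x →
      frobInner (Q.A - B.A) D.A = 0) :
    IsLFNModel B h x Q := by
  refine ⟨hint, fun Q' hQ' => ?_⟩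
  have hD : Interpolates (Q'.sub Q) (fun _ => 0) x := by
    intro i; rw [Quad.eval_sub, hint i, hQ' i]; simp
  have hrw : Q'.A - B.A = (Q.A - B.A) + (Q'.sub Q).A := by
    simp only [Quad.sub]; abel
  rw [hrw, frobSq_expand, horth _ hD]
  have := frobSq_nonneg (Q'.sub Q).A
  linarith

/-- Theorem `C1,k+C2,k`: if `M h` denotes the unique least Frobenius norm updating
model of `h` on `X` based on `Q_α`, and `Q̃` is the least Frobenius norm interpolant
of `Q_α` on `X` (base zero), then
`M(C₁f + C₂) = (C₁ M(f) + C₂) + (C₁ − 1)(Q̃ − Q_α)`. -/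
theorem lfn_updating_model_of_affine_transformed
    {n m : ℕ} (x : Fin m → (Fin n → ℝ)) (Qα : Quad n)
    (M : ((Fin n → ℝ) → ℝ) → Quad n)
    (hM : ∀ h : (Fin n → ℝ) → ℝ, (∃ Q : Quad n, Interpolates Q h x) →
      IsLFNModel Qα h x (M h) ∧ ∀ Q : Quad n, IsLFNModel Qα h x Q → Q = M h)
    (Qt : Quad n)
    (hQt : IsLFNModel Quad.zero Qα.eval x Qt ∧
      ∀ Q : Quad n, IsLFNModel Quad.zero Qα.eval x Q → Q = Qt)
    (f : (Fin n → ℝ) → ℝ) (hf : ∃ Q : Quad n, Interpolates Q f x)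
    (C₁ C₂ : ℝ) :
    M (fun y => C₁ * f y + C₂) =
      (((M f).smul C₁).addConst C₂).add ((Qt.sub Qα).smul (C₁ - 1)) := by
  obtain ⟨hMf, _⟩ := hM f hf
  obtain ⟨hQtM, _⟩ := hQt
  set R := (((M f).smul C₁).addConst C₂).add ((Qt.sub Qα).smul (C₁ - 1)) with hR
  have hRA : R.A - Qα.A = C₁ • ((M f).A - Qα.A) + (C₁ - 1) • (Qt.A - Quad.zero.A) := by
    simp only [hR, Quad.add, Quad.addConst, Quad.smul, Quad.sub, Quad.zero]
    ext i j
    simp [Matrix.add_apply, Matrix.sub_apply, Matrix.smul_apply, smul_eq_mul]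
    ring
  have hRint : Interpolates R (fun y => C₁ * f y + C₂) x := by
    intro i
    have ht : Qt.eval (x i) = Qα.eval (x i) := hQtM.1 i
    rw [hR]
    rw [Quad.eval_add, Quad.eval_addConst, Quad.eval_smul, Quad.eval_smul,
      Quad.eval_sub, hMf.1 i, ht]
    ring
  have hRmodel : IsLFNModel Qα (fun y => C₁ * f y + C₂) x R := by
    refine lfn_of_orth hRint fun D hD => ?_
    rw [hRA, frobInner_smul_add, lfn_orth hMf D hD, lfn_orth hQtM D hD]
    ring
  exact ((hM _ ⟨R, hRint⟩).2 R hRmodel).symm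
end

section
/- Projection property of least Frobenius norm updating: let X ⊂ ℝⁿ be an interpolation set and let Q_α be a quadratic. Suppose Q* is a minimizer of ‖∇²Q − ∇²Q_α‖_F² over all quadratics Q satisfying Q(x) = f(x) for all x ∈ X, where f itself is a quadratic function. Then ‖∇²Q* − ∇²f‖_F ≤ ‖∇²Q_α − ∇²f‖_F. -/
lemma quad_eval_add {n : ℕ} (P Q : Quad n) (y : Fin n → ℝ) :
    (P.add Q).eval y = P.eval y + Q.eval y := by
  simp only [Quad.eval, Quad.add, Pi.add_apply, Matrix.add_apply, mul_add, add_mul,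
    Finset.sum_add_distrib, Finset.mul_sum]
  ring

lemma quad_eval_sub {n : ℕ} (P Q : Quad n) (y : Fin n → ℝ) :
    (P.sub Q).eval y = P.eval y - Q.eval y := by
  simp only [Quad.eval, Quad.sub, Pi.sub_apply, Matrix.sub_apply, mul_sub, sub_mul,
    Finset.sum_sub_distrib, Finset.mul_sum]
  ring

lemma quad_eval_smul {n : ℕ} (r : ℝ) (Q : Quad n) (y : Fin n → ℝ) :
    (Quad.smul r Q).eval y = r * Q.eval y := by
  simp only [Quad.eval, Quad.smul, Pi.smul_apply, Matrix.smul_apply, smul_eq_mul]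
  rw [show (∑ i, r * Q.g i * y i) = r * ∑ i, Q.g i * y i by
      rw [Finset.mul_sum]; exact Finset.sum_congr rfl fun i _ => by ring,
    show (∑ i, ∑ j, y i * (r * Q.A i j) * y j) = r * ∑ i, ∑ j, y i * Q.A i j * y j by
      rw [Finset.mul_sum]
      refine Finset.sum_congr rfl fun i _ => ?_
      rw [Finset.mul_sum]
      exact Finset.sum_congr rfl fun j _ => by ring]
  ring

lemma frobSq_expand_s6 {n : ℕ} (U V : Matrix (Fin n) (Fin n) ℝ) (t : ℝ) :
    frobSq (U + t • V) = frobSq U + 2 * t * (∑ i, ∑ j, U i j * V i j)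
      + t ^ 2 * frobSq V := by
  simp only [frobSq, Finset.mul_sum, ← Finset.sum_add_distrib]
  apply Finset.sum_congr rfl; intro i _
  apply Finset.sum_congr rfl; intro j _
  simp only [Matrix.add_apply, Matrix.smul_apply, smul_eq_mul]
  ring

lemma frobSq_neg {n : ℕ} (M : Matrix (Fin n) (Fin n) ℝ) : frobSq (-M) = frobSq M := by
  simp [frobSq]

/-- Projection property of the least Frobenius norm updating model: if `f` is
itself a quadratic and `Q*` minimizes `‖∇²Q − ∇²Q_α‖_F` among quadratics
interpolating `f` on `X`, then `‖∇²Q* − ∇²f‖_F ≤ ‖∇²Q_α − ∇²f‖_F`. -/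
theorem lfn_updating_projection_property
    {n m : ℕ} (x : Fin m → (Fin n → ℝ)) (Qα f Qstar : Quad n)
    (h₁ : Interpolates Qstar f.eval x)
    (h₂ : ∀ Q' : Quad n, Interpolates Q' f.eval x →
      frobSq (Qstar.A - Qα.A) ≤ frobSq (Q'.A - Qα.A)) :
    Real.sqrt (frobSq (Qstar.A - f.A)) ≤ Real.sqrt (frobSq (Qα.A - f.A)) := by
  set U := Qstar.A - Qα.A with hU
  set V := f.A - Qstar.A with hV
  set I := ∑ i, ∑ j, U i j * V i j with hI
  set N := frobSq V with hN
  have hNnn : 0 ≤ N := frobSq_nonneg V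
  -- family of feasible quadratics
  have key : ∀ t : ℝ, frobSq U ≤ frobSq (U + t • V) := by
    intro t
    have hint : Interpolates (Qstar.add (Quad.smul t (f.sub Qstar))) f.eval x := by
      intro i
      rw [quad_eval_add, quad_eval_smul, quad_eval_sub, h₁ i]
      ring
    have := h₂ _ hint
    have hA : (Qstar.add (Quad.smul t (f.sub Qstar))).A - Qα.A = U + t • V := by
      show Qstar.A + t • (f.A - Qstar.A) - Qα.A = _
      rw [hU, hV]; abel
    rwa [hA] at this
  -- derive I = 0
  have hIzero : I = 0 := by
    have h0 : ∀ t : ℝ, 0 ≤ 2 * t * I + t ^ 2 * N := by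
      intro t
      have := key t
      rw [frobSq_expand_s6, ← hI, ← hN] at this
      linarith
    by_contra hne
    have := h0 (-I / (N + 1))
    have hpos : 0 < N + 1 := by linarith
    have hI2 : 0 < I ^ 2 := by positivity
    rw [div_pow] at this
    have h1 : 2 * (-I / (N + 1)) * I = -2 * I ^ 2 / (N + 1) := by ring
    have h2 : (-I) ^ 2 / (N + 1) ^ 2 * N = I ^ 2 * N / (N + 1) ^ 2 := by ring
    rw [h1, h2] at this
    have : 0 ≤ (-2 * I ^ 2 / (N + 1)) * (N + 1) ^ 2 + (I ^ 2 * N / (N + 1) ^ 2) * (N + 1) ^ 2 := by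
      nlinarith [sq_nonneg (N + 1)]
    rw [div_mul_cancel₀ _ (by positivity : ((N : ℝ) + 1) ^ 2 ≠ 0)] at this
    have h3 : -2 * I ^ 2 / (N + 1) * (N + 1) ^ 2 = -2 * I ^ 2 * (N + 1) := by
      field_simp
    rw [h3] at this
    nlinarith
  -- conclude
  have hdecomp : frobSq (Qα.A - f.A) = frobSq U + 2 * I + N := by
    have : Qα.A - f.A = -(U + (1 : ℝ) • V) := by rw [hU, hV, one_smul]; abel
    rw [this, frobSq_neg, frobSq_expand_s6, ← hI, ← hN]; ring
  have hsf : frobSq (Qstar.A - f.A) = N := by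
    have : Qstar.A - f.A = -V := by rw [hV]; abel
    rw [this, frobSq_neg]
  apply Real.sqrt_le_sqrt
  rw [hsf, hdecomp, hIzero]
  have := frobSq_nonneg U
  linarith
end

section
/- Let W = [[A, Xᵀ],[X, 0]] be the invertible KKT matrix with X ∈ ℝ^{(n+1)×m} having first row all ones and remaining rows (x_j − x₀). If (λᵀ, c, gᵀ)ᵀ = W⁻¹ (rᵀ, 0,…,0)ᵀ, then the multipliers λ satisfy Σ_{j=1}^m λ_j = 0 and Σ_{j=1}^m λ_j (x_j − x₀) = 0 ∈ ℝⁿ. Consequently the matrix Σ_{j=1}^m λ_j (x_j − x₀)(x_j − x₀)ᵀ is unchanged if x₀ is replaced by any other base point; in particular the Hessian ∇²D = Σ_j λ_j (x_j − x₀)(x_j − x₀)ᵀ of the model difference is well-defined independently of the base point. -/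
/-- Properties of the Lagrange multipliers in the least Frobenius norm updating
KKT system: `Σ λ_j = 0`, `Σ λ_j (x_j − x₀) = 0`, and consequently the Hessian
`Σ λ_j (x_j − x₀)(x_j − x₀)ᵀ` is independent of the choice of base point. -/
theorem kkt_multipliers_and_base_point_invariance
    {m n : ℕ} (x : Fin m → (Fin n → ℝ)) (x₀ : Fin n → ℝ)
    (A : Matrix (Fin m) (Fin m) ℝ)
    (hA : ∀ i j, A i j = (1 / 2) * (∑ k, (x i k - x₀ k) * (x j k - x₀ k)) ^ 2)
    (Xmat : Matrix (Fin (n + 1)) (Fin m) ℝ)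
    (hXmat0 : ∀ j, Xmat 0 j = 1)
    (hXmat1 : ∀ (i : Fin n) (j : Fin m), Xmat i.succ j = x j i - x₀ i)
    (W : Matrix (Fin m ⊕ Fin (n + 1)) (Fin m ⊕ Fin (n + 1)) ℝ)
    (hW : W = Matrix.fromBlocks A Xmat.transpose Xmat 0)
    (hWinv : IsUnit W.det)
    (r : Fin m → ℝ) (lam : Fin m → ℝ)
    (hlam : ∀ j, lam j = W⁻¹.mulVec (Sum.elim r 0) (Sum.inl j)) :
    (∑ j, lam j = 0) ∧
      (∀ i : Fin n, ∑ j, lam j * (x j i - x₀ i) = 0) ∧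
      (∀ y : Fin n → ℝ,
        ∑ j, lam j • Matrix.vecMulVec (x j - y) (x j - y) =
          ∑ j, lam j • Matrix.vecMulVec (x j - x₀) (x j - x₀)) := by
  set v := W⁻¹.mulVec (Sum.elim r 0) with hv
  have hWv : W.mulVec v = Sum.elim r 0 := by
    rw [hv, Matrix.mulVec_mulVec, Matrix.mul_nonsing_inv _ hWinv, Matrix.one_mulVec]
  have h0 : ∀ i : Fin (n + 1), ∑ j, Xmat i j * lam j = 0 := by
    intro i
    have h := congrFun hWv (Sum.inr i)
    simp [Matrix.mulVec, dotProduct, hW, Fintype.sum_sum_type,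
      Matrix.fromBlocks] at h
    calc ∑ j, Xmat i j * lam j = ∑ j, Xmat i j * v (Sum.inl j) := by
          simp [hlam]
      _ = 0 := h
  have hsum : ∑ j, lam j = 0 := by
    have := h0 0
    simpa [hXmat0] using this
  have hlin : ∀ i : Fin n, ∑ j, lam j * (x j i - x₀ i) = 0 := by
    intro i
    have := h0 i.succ
    simp only [hXmat1] at this
    calc ∑ j, lam j * (x j i - x₀ i) = ∑ j, (x j i - x₀ i) * lam j := by
          simp [mul_comm]
      _ = 0 := this
  refine ⟨hsum, hlin, ?_⟩
  intro y
  ext a b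
  simp only [Matrix.sum_apply, Matrix.smul_apply, Matrix.vecMulVec_apply,
    Pi.sub_apply, smul_eq_mul]
  have expand : ∀ j, lam j * ((x j a - y a) * (x j b - y b)) =
      lam j * ((x j a - x₀ a) * (x j b - x₀ b))
      + (x₀ b - y b) * (lam j * (x j a - x₀ a))
      + (x₀ a - y a) * (lam j * (x j b - x₀ b))
      + ((x₀ a - y a) * (x₀ b - y b)) * lam j := by intro j; ring
  simp_rw [expand]
  rw [Finset.sum_add_distrib, Finset.sum_add_distrib, Finset.sum_add_distrib,
    ← Finset.mul_sum, ← Finset.mul_sum, ← Finset.mul_sum, hlin a, hlin b, hsum]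
  ring
end
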